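/- Let n ∈ ℕ, let B, C, X, Z be n×n complex matrices such that X² + B·X + C = 0, Z² + B·Z + C = 0, and X − Z is invertible, and let f : ℝ → ℂⁿ be continuous. Define U(t) = (exp(t·X) − exp(t·Z))·(X − Z)⁻¹ and V(t) = (X·exp(t·X) − Z·exp(t·Z))·(X − Z)⁻¹ (so V = U'). Then for any u₀, u₁ ∈ ℂⁿ, the derivative of the solution x(t) = V(t)·u₀ + U(t)·(u₁ + B·u₀) + ∫₀ᵗ U(t − s)·f(s) ds is given by x'(t) = V(t)·u₁ − U(t)·C·u₀ + ∫₀ᵗ V(t − s)·f(s) ds for all t ∈ ℝ. -/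

import Mathlib

open NormedSpace

section helpers

variable {n : ℕ}

private lemma keyAlg (n : ℕ) (B C X Z : Matrix (Fin n) (Fin n) ℂ)
    (hX : X ^ 2 + B * X + C = 0) (hZ : Z ^ 2 + B * Z + C = 0) (hXZ : IsUnit (X - Z)) :
    X ^ 2 * (X - Z)⁻¹ + X * ((X - Z)⁻¹ * B) + (X - Z)⁻¹ * C = 0 ∧
    Z ^ 2 * (X - Z)⁻¹ + Z * ((X - Z)⁻¹ * B) + (X - Z)⁻¹ * C = 0 := by
  set A := (X - Z)⁻¹ with hA
  have hdet : IsUnit (X - Z).det := (Matrix.isUnit_iff_isUnit_det _).mp hXZ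
  have h1 : (X - Z) * A = 1 := Matrix.mul_nonsing_inv _ hdet
  have h2 : A * (X - Z) = 1 := Matrix.nonsing_inv_mul _ hdet
  have q2 : (X ^ 2 - Z ^ 2) * A = -B := by
    have e1 : X ^ 2 - Z ^ 2 = -(B * (X - Z)) := by
      linear_combination (norm := noncomm_ring) hX - hZ
    calc (X ^ 2 - Z ^ 2) * A = -(B * ((X - Z) * A)) := by rw [e1]; noncomm_ring
      _ = -B := by rw [h1, mul_one]
  have q3 : (X ^ 3 - Z ^ 3) * A = B * B - C := by
    have e2 : X ^ 3 - Z ^ 3 = -(B * (X ^ 2 - Z ^ 2)) - C * (X - Z) := by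
      linear_combination (norm := noncomm_ring) hX * X - hZ * Z
    calc (X ^ 3 - Z ^ 3) * A = -(B * ((X ^ 2 - Z ^ 2) * A)) - C * ((X - Z) * A) := by
          rw [e2]; noncomm_ring
      _ = B * B - C := by rw [q2, h1, mul_one]; noncomm_ring
  set MX := X ^ 2 * A + X * (A * B) + A * C with hMX
  set MZ := Z ^ 2 * A + Z * (A * B) + A * C with hMZ
  have hMeq : MX = MZ := by
    have e : MX - MZ = (X ^ 2 - Z ^ 2) * A + ((X - Z) * A) * B := by
      rw [hMX, hMZ]; noncomm_ring
    have h0 : MX - MZ = 0 := by rw [e, q2, h1]; noncomm_ring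
    linear_combination (norm := noncomm_ring) h0
  have hXM : X * MX - Z * MZ = 0 := by
    have e : X * MX - Z * MZ =
        (X ^ 3 - Z ^ 3) * A + ((X ^ 2 - Z ^ 2) * A) * B + ((X - Z) * A) * C := by
      rw [hMX, hMZ]; noncomm_ring
    rw [e, q3, q2, h1]; noncomm_ring
  have hWMX : (X - Z) * MX = 0 := by
    have h0 : X * MX - Z * MX = 0 := by rw [hMeq] at *; exact hXM
    linear_combination (norm := noncomm_ring) h0
  have hMX0 : MX = 0 := by
    calc MX = (A * (X - Z)) * MX := by rw [h2, one_mul]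
      _ = A * ((X - Z) * MX) := by rw [mul_assoc]
      _ = 0 := by rw [hWMX, mul_zero]
  exact ⟨hMX0, hMeq ▸ hMX0⟩

private noncomputable def mulVecL (n : ℕ) (M : Matrix (Fin n) (Fin n) ℂ) :
    (Fin n → ℂ) →L[ℝ] (Fin n → ℂ) :=
  LinearMap.toContinuousLinearMap (M.mulVecLin.restrictScalars ℝ)

@[simp] private lemma mulVecL_apply (M : Matrix (Fin n) (Fin n) ℂ) (v : Fin n → ℂ) :
    mulVecL n M v = M.mulVec v := rfl

private lemma expVec_hasDerivAt (X : Matrix (Fin n) (Fin n) ℂ) (v : Fin n → ℂ) (t : ℝ) :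
    HasDerivAt (fun s : ℝ => (exp ((s : ℂ) • X)).mulVec v)
      (X.mulVec ((exp ((t : ℂ) • X)).mulVec v)) t := by
  letI : SeminormedRing (Matrix (Fin n) (Fin n) ℂ) := Matrix.linftyOpSemiNormedRing
  letI : NormedRing (Matrix (Fin n) (Fin n) ℂ) := Matrix.linftyOpNormedRing
  letI : NormedAlgebra ℝ (Matrix (Fin n) (Fin n) ℂ) := Matrix.linftyOpNormedAlgebra
  have hsmul : ∀ s : ℝ, (s : ℂ) • X = s • X := fun s => by
    rw [← algebraMap_smul ℂ s X]; norm_num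
  have hexp : (exp : Matrix (Fin n) (Fin n) ℂ → _) = exp :=
    rfl
  have h1 : HasDerivAt (fun s : ℝ => exp (s • X)) (X * exp (t • X)) t :=
    hasDerivAt_exp_smul_const' X t
  let ψ : Matrix (Fin n) (Fin n) ℂ →ₗ[ℝ] (Fin n → ℂ) :=
    { toFun := fun M => M.mulVec v
      map_add' := fun M N => Matrix.add_mulVec M N v
      map_smul' := fun c M => Matrix.smul_mulVec c M v }
  have h2 := (LinearMap.toContinuousLinearMap ψ).hasFDerivAt.comp_hasDerivAt t h1
  simp only [LinearMap.coe_toContinuousLinearMap', LinearMap.coe_mk,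
    AddHom.coe_mk, Function.comp_def] at h2
  have goal_eq : (fun s : ℝ => (exp ((s : ℂ) • X)).mulVec v)
      = fun s : ℝ => (exp (s • X)).mulVec v := by
    funext s; rw [hsmul, hexp]
  rw [goal_eq, hsmul, hexp, Matrix.mulVec_mulVec]
  exact h2

private lemma expCLM_hasDerivAt (X : Matrix (Fin n) (Fin n) ℂ) (t : ℝ) :
    HasDerivAt (fun s : ℝ => mulVecL n (exp ((s : ℂ) • X)))
      (mulVecL n (X * exp ((t : ℂ) • X))) t := by
  letI : SeminormedRing (Matrix (Fin n) (Fin n) ℂ) := Matrix.linftyOpSemiNormedRing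
  letI : NormedRing (Matrix (Fin n) (Fin n) ℂ) := Matrix.linftyOpNormedRing
  letI : NormedAlgebra ℝ (Matrix (Fin n) (Fin n) ℂ) := Matrix.linftyOpNormedAlgebra
  have hsmul : ∀ s : ℝ, (s : ℂ) • X = s • X := fun s => by
    rw [← algebraMap_smul ℂ s X]; norm_num
  have hexp : (exp : Matrix (Fin n) (Fin n) ℂ → _) = exp :=
    rfl
  have h1 : HasDerivAt (fun s : ℝ => exp (s • X)) (X * exp (t • X)) t :=
    hasDerivAt_exp_smul_const' X t
  let ψ : Matrix (Fin n) (Fin n) ℂ →ₗ[ℝ] ((Fin n → ℂ) →L[ℝ] (Fin n → ℂ)) :=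
    { toFun := fun M => mulVecL n M
      map_add' := fun M N => by
        ext v; simp [Matrix.add_mulVec]
      map_smul' := fun c M => by
        ext v; simp [Matrix.smul_mulVec] }
  have h2 := (LinearMap.toContinuousLinearMap ψ).hasFDerivAt.comp_hasDerivAt t h1
  simp only [LinearMap.coe_toContinuousLinearMap', LinearMap.coe_mk,
    AddHom.coe_mk, Function.comp_def] at h2
  have goal_eq : (fun s : ℝ => mulVecL n (exp ((s : ℂ) • X)))
      = fun s : ℝ => mulVecL n (exp (s • X)) := by
    funext s; rw [hsmul, hexp]
  rw [goal_eq, hsmul, hexp]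
  exact h2

private lemma expEntry_continuous (X : Matrix (Fin n) (Fin n) ℂ) (i j : Fin n) :
    Continuous fun s : ℝ => exp ((s : ℂ) • X) i j := by
  have hcol : Continuous fun s : ℝ => (exp ((s : ℂ) • X)).mulVec (Pi.single j 1) :=
    continuous_iff_continuousAt.2 fun t => (expVec_hasDerivAt X _ t).continuousAt
  have h := (continuous_apply i).comp hcol
  simpa [Matrix.mulVec_single, Function.comp_def] using h

private lemma expMulVec_continuous (X : Matrix (Fin n) (Fin n) ℂ) (σ : ℝ → ℝ)
    (hσ : Continuous σ) (g : ℝ → Fin n → ℂ) (hg : Continuous g) :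
    Continuous fun s : ℝ => (exp ((σ s : ℂ) • X)).mulVec (g s) := by
  apply continuous_pi; intro i
  simp only [Matrix.mulVec, dotProduct]
  exact continuous_finset_sum _ fun j _ =>
    ((expEntry_continuous X i j).comp hσ).mul ((continuous_apply j).comp hg)

private lemma exp_comm (X : Matrix (Fin n) (Fin n) ℂ) (c : ℂ) :
    X * exp (c • X) = exp (c • X) * X :=
  (((Commute.refl X).smul_right c).exp_right).eq

private lemma exp_add_smul (X : Matrix (Fin n) (Fin n) ℂ) (a b : ℝ) :
    exp (((a + b : ℝ) : ℂ) • X) = exp ((a : ℂ) • X) * exp ((b : ℂ) • X) := by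
  rw [← Matrix.exp_add_of_commute _ _ (((Commute.refl X).smul_left _).smul_right _)]
  congr 1; push_cast; rw [add_smul]

private lemma exp_sub_smul (X : Matrix (Fin n) (Fin n) ℂ) (a b : ℝ) :
    exp (((a - b : ℝ) : ℂ) • X) = exp ((a : ℂ) • X) * exp (((-b : ℝ) : ℂ) • X) := by
  rw [show (a - b : ℝ) = a + (-b) by ring, exp_add_smul]

private lemma exp_neg_cancel (X : Matrix (Fin n) (Fin n) ℂ) (t : ℝ) :
    exp ((t : ℂ) • X) * exp (((-t : ℝ) : ℂ) • X) = 1 := by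
  have h := (exp_add_smul X t (-t)).symm
  rwa [add_neg_cancel, show ((0 : ℝ) : ℂ) = 0 by norm_num, zero_smul, exp_zero] at h

end helpers

/-- the derivative of the solution
`x(t) = V(t)u₀ + U(t)(u₁ + Bu₀) + ∫₀ᵗ U(t−s)f(s) ds` is given by
`x'(t) = V(t)u₁ − U(t)Cu₀ + ∫₀ᵗ V(t−s)f(s) ds`. -/
theorem derivative_of_solution (n : ℕ) (B C X Z : Matrix (Fin n) (Fin n) ℂ)
    (hX : X ^ 2 + B * X + C = 0) (hZ : Z ^ 2 + B * Z + C = 0) (hXZ : IsUnit (X - Z))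
    (f : ℝ → (Fin n → ℂ)) (hf : Continuous f)
    (U V : ℝ → Matrix (Fin n) (Fin n) ℂ)
    (hU : ∀ t : ℝ, U t =
      (NormedSpace.exp ((t : ℂ) • X) - NormedSpace.exp ((t : ℂ) • Z)) * (X - Z)⁻¹)
    (hV : ∀ t : ℝ, V t =
      (X * NormedSpace.exp ((t : ℂ) • X) - Z * NormedSpace.exp ((t : ℂ) • Z)) * (X - Z)⁻¹)
    (u₀ u₁ : Fin n → ℂ) (x : ℝ → (Fin n → ℂ))
    (hx : ∀ t : ℝ, x t = (V t).mulVec u₀ + (U t).mulVec (u₁ + B.mulVec u₀) +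
      ∫ s in (0:ℝ)..t, (U (t - s)).mulVec (f s)) :
    ∀ t : ℝ, HasDerivAt x
      ((V t).mulVec u₁ - (U t).mulVec (C.mulVec u₀) +
        ∫ s in (0:ℝ)..t, (V (t - s)).mulVec (f s)) t := by
  intro t
  obtain ⟨kX, kZ⟩ := keyAlg n B C X Z hX hZ hXZ
  set A := (X - Z)⁻¹ with hA
  set w₁ : Fin n → ℂ := u₁ + B.mulVec u₀ with hw₁
  have hAf : Continuous fun s : ℝ => A.mulVec (f s) := (mulVecL n A).continuous.comp hf
  set gX : ℝ → Fin n → ℂ :=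
    fun s => (exp (((-s : ℝ) : ℂ) • X)).mulVec (A.mulVec (f s)) with hgX
  set gZ : ℝ → Fin n → ℂ :=
    fun s => (exp (((-s : ℝ) : ℂ) • Z)).mulVec (A.mulVec (f s)) with hgZ
  have hgXc : Continuous gX := expMulVec_continuous X (fun s => -s) continuous_neg _ hAf
  have hgZc : Continuous gZ := expMulVec_continuous Z (fun s => -s) continuous_neg _ hAf
  -- pointwise rewrite of the U-convolution integrand
  have hUc : ∀ r s : ℝ, (U (r - s)).mulVec (f s) =
      mulVecL n (exp ((r : ℂ) • X)) (gX s) - mulVecL n (exp ((r : ℂ) • Z)) (gZ s) := by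
    intro r s
    rw [hU, exp_sub_smul, exp_sub_smul, hgX, hgZ]
    simp only [mulVecL_apply, Matrix.sub_mul, Matrix.sub_mulVec, Matrix.mulVec_mulVec,
      mul_assoc]
  have hVc : ∀ s : ℝ, (V (t - s)).mulVec (f s) =
      mulVecL n (X * exp ((t : ℂ) • X)) (gX s)
        - mulVecL n (Z * exp ((t : ℂ) • Z)) (gZ s) := by
    intro s
    rw [hV, exp_sub_smul, exp_sub_smul, hgX, hgZ]
    simp only [mulVecL_apply, Matrix.sub_mul, Matrix.sub_mulVec, Matrix.mulVec_mulVec,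
      mul_assoc]
  -- convolution representation
  have hconvU : ∀ r : ℝ, (∫ s in (0:ℝ)..r, (U (r - s)).mulVec (f s)) =
      mulVecL n (exp ((r : ℂ) • X)) (∫ s in (0:ℝ)..r, gX s)
        - mulVecL n (exp ((r : ℂ) • Z)) (∫ s in (0:ℝ)..r, gZ s) := by
    intro r
    have h1 : IntervalIntegrable (fun s => mulVecL n (exp ((r : ℂ) • X)) (gX s))
        MeasureTheory.volume 0 r :=
      (((mulVecL n _).continuous.comp hgXc)).intervalIntegrable _ _
    have h2 : IntervalIntegrable (fun s => mulVecL n (exp ((r : ℂ) • Z)) (gZ s))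
        MeasureTheory.volume 0 r :=
      (((mulVecL n _).continuous.comp hgZc)).intervalIntegrable _ _
    calc (∫ s in (0:ℝ)..r, (U (r - s)).mulVec (f s))
        = ∫ s in (0:ℝ)..r, (mulVecL n (exp ((r : ℂ) • X)) (gX s)
            - mulVecL n (exp ((r : ℂ) • Z)) (gZ s)) := by
          apply intervalIntegral.integral_congr; intro s _; exact hUc r s
      _ = (∫ s in (0:ℝ)..r, mulVecL n (exp ((r : ℂ) • X)) (gX s))
            - ∫ s in (0:ℝ)..r, mulVecL n (exp ((r : ℂ) • Z)) (gZ s) :=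
          intervalIntegral.integral_sub h1 h2
      _ = mulVecL n (exp ((r : ℂ) • X)) (∫ s in (0:ℝ)..r, gX s)
            - mulVecL n (exp ((r : ℂ) • Z)) (∫ s in (0:ℝ)..r, gZ s) := by
          rw [ContinuousLinearMap.intervalIntegral_comp_comm _
              (hgXc.intervalIntegrable _ _),
            ContinuousLinearMap.intervalIntegral_comp_comm _
              (hgZc.intervalIntegrable _ _)]
  have hconvV : (∫ s in (0:ℝ)..t, (V (t - s)).mulVec (f s)) =
      mulVecL n (X * exp ((t : ℂ) • X)) (∫ s in (0:ℝ)..t, gX s)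
        - mulVecL n (Z * exp ((t : ℂ) • Z)) (∫ s in (0:ℝ)..t, gZ s) := by
    have h1 : IntervalIntegrable (fun s => mulVecL n (X * exp ((t : ℂ) • X)) (gX s))
        MeasureTheory.volume 0 t :=
      (((mulVecL n _).continuous.comp hgXc)).intervalIntegrable _ _
    have h2 : IntervalIntegrable (fun s => mulVecL n (Z * exp ((t : ℂ) • Z)) (gZ s))
        MeasureTheory.volume 0 t :=
      (((mulVecL n _).continuous.comp hgZc)).intervalIntegrable _ _
    calc (∫ s in (0:ℝ)..t, (V (t - s)).mulVec (f s))
        = ∫ s in (0:ℝ)..t, (mulVecL n (X * exp ((t : ℂ) • X)) (gX s)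
            - mulVecL n (Z * exp ((t : ℂ) • Z)) (gZ s)) := by
          apply intervalIntegral.integral_congr; intro s _; exact hVc s
      _ = (∫ s in (0:ℝ)..t, mulVecL n (X * exp ((t : ℂ) • X)) (gX s))
            - ∫ s in (0:ℝ)..t, mulVecL n (Z * exp ((t : ℂ) • Z)) (gZ s) :=
          intervalIntegral.integral_sub h1 h2
      _ = _ := by
          rw [ContinuousLinearMap.intervalIntegral_comp_comm _
              (hgXc.intervalIntegrable _ _),
            ContinuousLinearMap.intervalIntegral_comp_comm _
              (hgZc.intervalIntegrable _ _)]
  -- the function x in explicit form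
  have hxF : x = fun r : ℝ =>
      (X.mulVec ((exp ((r : ℂ) • X)).mulVec (A.mulVec u₀))
        - Z.mulVec ((exp ((r : ℂ) • Z)).mulVec (A.mulVec u₀)))
      + ((exp ((r : ℂ) • X)).mulVec (A.mulVec w₁)
        - (exp ((r : ℂ) • Z)).mulVec (A.mulVec w₁))
      + (mulVecL n (exp ((r : ℂ) • X)) (∫ s in (0:ℝ)..r, gX s)
        - mulVecL n (exp ((r : ℂ) • Z)) (∫ s in (0:ℝ)..r, gZ s)) := by
    funext r
    rw [hx r, hconvU r, hV r, hU r]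
    simp only [mulVecL_apply, Matrix.sub_mul, Matrix.sub_mulVec, Matrix.mulVec_mulVec,
      mul_assoc]
  -- derivatives of the pieces
  have hIXd : HasDerivAt (fun r : ℝ => ∫ s in (0:ℝ)..r, gX s) (gX t) t :=
    intervalIntegral.integral_hasDerivAt_right (hgXc.intervalIntegrable _ _)
      (hgXc.stronglyMeasurableAtFilter _ _) hgXc.continuousAt
  have hIZd : HasDerivAt (fun r : ℝ => ∫ s in (0:ℝ)..r, gZ s) (gZ t) t :=
    intervalIntegral.integral_hasDerivAt_right (hgZc.intervalIntegrable _ _)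
      (hgZc.stronglyMeasurableAtFilter _ _) hgZc.continuousAt
  have hD1X : HasDerivAt (fun r : ℝ => X.mulVec ((exp ((r : ℂ) • X)).mulVec (A.mulVec u₀)))
      (X.mulVec (X.mulVec ((exp ((t : ℂ) • X)).mulVec (A.mulVec u₀)))) t := by
    have h := (mulVecL n X).hasFDerivAt.comp_hasDerivAt t (expVec_hasDerivAt X (A.mulVec u₀) t)
    simpa [Function.comp_def] using h
  have hD1Z : HasDerivAt (fun r : ℝ => Z.mulVec ((exp ((r : ℂ) • Z)).mulVec (A.mulVec u₀)))
      (Z.mulVec (Z.mulVec ((exp ((t : ℂ) • Z)).mulVec (A.mulVec u₀)))) t := by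
    have h := (mulVecL n Z).hasFDerivAt.comp_hasDerivAt t (expVec_hasDerivAt Z (A.mulVec u₀) t)
    simpa [Function.comp_def] using h
  have hD2X : HasDerivAt (fun r : ℝ => (exp ((r : ℂ) • X)).mulVec (A.mulVec w₁))
      (X.mulVec ((exp ((t : ℂ) • X)).mulVec (A.mulVec w₁))) t :=
    expVec_hasDerivAt X _ t
  have hD2Z : HasDerivAt (fun r : ℝ => (exp ((r : ℂ) • Z)).mulVec (A.mulVec w₁))
      (Z.mulVec ((exp ((t : ℂ) • Z)).mulVec (A.mulVec w₁))) t :=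
    expVec_hasDerivAt Z _ t
  have hD3X : HasDerivAt (fun r : ℝ => mulVecL n (exp ((r : ℂ) • X)) (∫ s in (0:ℝ)..r, gX s))
      (mulVecL n (X * exp ((t : ℂ) • X)) (∫ s in (0:ℝ)..t, gX s)
        + mulVecL n (exp ((t : ℂ) • X)) (gX t)) t :=
    (expCLM_hasDerivAt X t).clm_apply hIXd
  have hD3Z : HasDerivAt (fun r : ℝ => mulVecL n (exp ((r : ℂ) • Z)) (∫ s in (0:ℝ)..r, gZ s))
      (mulVecL n (Z * exp ((t : ℂ) • Z)) (∫ s in (0:ℝ)..t, gZ s)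
        + mulVecL n (exp ((t : ℂ) • Z)) (gZ t)) t :=
    (expCLM_hasDerivAt Z t).clm_apply hIZd
  have hcancelX : mulVecL n (exp ((t : ℂ) • X)) (gX t) = A.mulVec (f t) := by
    rw [hgX]
    show (exp ((t : ℂ) • X)).mulVec ((exp (((-t : ℝ) : ℂ) • X)).mulVec (A.mulVec (f t)))
      = A.mulVec (f t)
    rw [Matrix.mulVec_mulVec, Matrix.mulVec_mulVec, exp_neg_cancel, one_mul]
  have hcancelZ : mulVecL n (exp ((t : ℂ) • Z)) (gZ t) = A.mulVec (f t) := by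
    rw [hgZ]
    show (exp ((t : ℂ) • Z)).mulVec ((exp (((-t : ℝ) : ℂ) • Z)).mulVec (A.mulVec (f t)))
      = A.mulVec (f t)
    rw [Matrix.mulVec_mulVec, Matrix.mulVec_mulVec, exp_neg_cancel, one_mul]
  -- total derivative
  have hD : HasDerivAt x
      ((X.mulVec (X.mulVec ((exp ((t : ℂ) • X)).mulVec (A.mulVec u₀)))
        - Z.mulVec (Z.mulVec ((exp ((t : ℂ) • Z)).mulVec (A.mulVec u₀))))
      + (X.mulVec ((exp ((t : ℂ) • X)).mulVec (A.mulVec w₁))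
        - Z.mulVec ((exp ((t : ℂ) • Z)).mulVec (A.mulVec w₁)))
      + ((mulVecL n (X * exp ((t : ℂ) • X)) (∫ s in (0:ℝ)..t, gX s) + A.mulVec (f t))
        - (mulVecL n (Z * exp ((t : ℂ) • Z)) (∫ s in (0:ℝ)..t, gZ s) + A.mulVec (f t)))) t := by
    rw [hxF]
    exact (((hD1X.sub hD1Z).add (hD2X.sub hD2Z)).add
      ((hcancelX ▸ hD3X).sub (hcancelZ ▸ hD3Z)))
  -- identify the derivative value
  convert hD using 1
  rw [hconvV]
  -- matrix identities from the algebraic key lemma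
  set EXt := exp ((t : ℂ) • X) with hEXt
  set EZt := exp ((t : ℂ) • Z) with hEZt
  have hcX : ∀ Y : Matrix (Fin n) (Fin n) ℂ, X * (EXt * Y) = EXt * (X * Y) := fun Y => by
    rw [← mul_assoc, exp_comm X ((t : ℂ)), mul_assoc]
  have hcZ : ∀ Y : Matrix (Fin n) (Fin n) ℂ, Z * (EZt * Y) = EZt * (Z * Y) := fun Y => by
    rw [← mul_assoc, exp_comm Z ((t : ℂ)), mul_assoc]
  have kX' : X * (X * (EXt * A)) + X * (EXt * (A * B)) + EXt * (A * C) = 0 := by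
    have hk : X * (X * A) + X * (A * B) + A * C = 0 := by
      linear_combination (norm := noncomm_ring) kX
    calc X * (X * (EXt * A)) + X * (EXt * (A * B)) + EXt * (A * C)
        = EXt * (X * (X * A)) + EXt * (X * (A * B)) + EXt * (A * C) := by
          rw [hcX A, hcX (X * A), hcX (A * B)]
      _ = EXt * (X * (X * A) + X * (A * B) + A * C) := by noncomm_ring
      _ = 0 := by rw [hk, mul_zero]
  have kZ' : Z * (Z * (EZt * A)) + Z * (EZt * (A * B)) + EZt * (A * C) = 0 := by
    have hk : Z * (Z * A) + Z * (A * B) + A * C = 0 := by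
      linear_combination (norm := noncomm_ring) kZ
    calc Z * (Z * (EZt * A)) + Z * (EZt * (A * B)) + EZt * (A * C)
        = EZt * (Z * (Z * A)) + EZt * (Z * (A * B)) + EZt * (A * C) := by
          rw [hcZ A, hcZ (Z * A), hcZ (A * B)]
      _ = EZt * (Z * (Z * A) + Z * (A * B) + A * C) := by noncomm_ring
      _ = 0 := by rw [hk, mul_zero]
  have mV : X * (EXt * A) - Z * (EZt * A) = V t := by
    rw [hV t, Matrix.sub_mul, mul_assoc, mul_assoc]
  have mUC : U t * C = EXt * (A * C) - EZt * (A * C) := by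
    rw [hU t, Matrix.sub_mul, Matrix.sub_mul, mul_assoc, mul_assoc]
  have coeff0 : X * (X * (EXt * A)) + X * (EXt * (A * B))
      - (Z * (Z * (EZt * A)) + Z * (EZt * (A * B))) = -(U t * C) := by
    rw [mUC]
    linear_combination (norm := noncomm_ring) kX' - kZ'
  -- final vector computation
  calc (V t).mulVec u₁ - (U t).mulVec (C.mulVec u₀)
      + (mulVecL n (X * EXt) (∫ s in (0:ℝ)..t, gX s)
        - mulVecL n (Z * EZt) (∫ s in (0:ℝ)..t, gZ s))
      = ((-(U t * C)).mulVec u₀ + (V t).mulVec u₁)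
        + (mulVecL n (X * EXt) (∫ s in (0:ℝ)..t, gX s)
          - mulVecL n (Z * EZt) (∫ s in (0:ℝ)..t, gZ s)) := by
        rw [Matrix.neg_mulVec, Matrix.mulVec_mulVec]; abel
    _ = ((X * (X * (EXt * A)) + X * (EXt * (A * B))
          - (Z * (Z * (EZt * A)) + Z * (EZt * (A * B)))).mulVec u₀
        + (X * (EXt * A) - Z * (EZt * A)).mulVec u₁)
        + (mulVecL n (X * EXt) (∫ s in (0:ℝ)..t, gX s)
          - mulVecL n (Z * EZt) (∫ s in (0:ℝ)..t, gZ s)) := by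
        rw [coeff0, mV]
    _ = (X.mulVec (X.mulVec (EXt.mulVec (A.mulVec u₀)))
          - Z.mulVec (Z.mulVec (EZt.mulVec (A.mulVec u₀))))
        + (X.mulVec (EXt.mulVec (A.mulVec w₁)) - Z.mulVec (EZt.mulVec (A.mulVec w₁)))
        + ((mulVecL n (X * EXt) (∫ s in (0:ℝ)..t, gX s) + A.mulVec (f t))
          - (mulVecL n (Z * EZt) (∫ s in (0:ℝ)..t, gZ s) + A.mulVec (f t))) := by
        rw [hw₁]
        simp only [Matrix.mulVec_add, Matrix.mulVec_mulVec, Matrix.sub_mulVec,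
          Matrix.add_mulVec, mul_assoc]
        abel
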